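/- Let ω ∈ S_n and 1 ≤ i < j ≤ n. If m_{i,a}(ω) > m_{j,b}(ω) with a < c_i(ω) and b < c_j(ω), then m_{i,a+1}(ω) > m_{j,b+1}(ω). -/

import Mathlib

open Finset

/-- `c_i(ω)`: the number of `j > i` with `ω i > ω j` (the Lehmer code entries). -/
def lehmer {n : ℕ} (ω : Equiv.Perm (Fin n)) (i : Fin n) : ℕ :=
  (univ.filter fun j => i < j ∧ ω j < ω i).card

/-- `c_{i,j}(ω)`: the number of `k` with `i < k < j` and `ω i > ω k`. -/
def cij {n : ℕ} (ω : Equiv.Perm (Fin n)) (i j : Fin n) : ℕ :=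
  (univ.filter fun k => i < k ∧ k < j ∧ ω k < ω i).card

/-- `m_{i,x}(ω) ∈ ℕ^n`, defined coordinatewise. -/
def mvec {n : ℕ} (ω : Equiv.Perm (Fin n)) (i : Fin n) (x : ℕ) : Fin n → ℕ :=
  fun j => if j < i then 0 else if j = i then x
    else if ω j < ω i then 0 else x - cij ω i j

lemma cij_triangle {n : ℕ} (ω : Equiv.Perm (Fin n)) (i j k : Fin n)
    (hij : i < j) (hjk : j < k) (hw : ω i < ω j) :
    cij ω i k ≤ cij ω i j + cij ω j k := by
  unfold cij
  calc (univ.filter fun l => i < l ∧ l < k ∧ ω l < ω i).card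
      ≤ ((univ.filter fun l => i < l ∧ l < j ∧ ω l < ω i) ∪
         (univ.filter fun l => j < l ∧ l < k ∧ ω l < ω j)).card := by
        apply card_le_card
        intro l hl
        simp only [mem_filter, mem_union, mem_univ, true_and] at *
        rcases lt_trichotomy l j with h1 | h1 | h1
        · exact Or.inl ⟨hl.1, h1, hl.2.2⟩
        · subst h1; exact absurd hl.2.2 (lt_asymm hw)
        · exact Or.inr ⟨h1, hl.2.1, hl.2.2.trans hw⟩
    _ ≤ _ := card_union_le _ _

theorem stmt8 (n : ℕ) (ω : Equiv.Perm (Fin n)) (i j : Fin n) (a b : ℕ)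
    (hij : i < j) (ha1 : 1 ≤ a) (hb1 : 1 ≤ b)
    (ha : a < lehmer ω i) (hb : b < lehmer ω j)
    (h : mvec ω j b < mvec ω i a) :
    mvec ω j (b + 1) < mvec ω i (a + 1) := by
  rw [Pi.lt_def] at h ⊢
  obtain ⟨hle, -⟩ := h
  have hne : j ≠ i := hij.ne'
  have hjlt : ¬ j < i := not_lt_of_gt hij
  -- coordinate j of hle
  have hj0 : b ≤ if ω j < ω i then 0 else a - cij ω i j := by
    have := hle j
    simpa only [mvec, lt_self_iff_false, if_false, if_pos rfl, if_neg hjlt,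
      if_neg hne, ↓reduceIte] using this
  -- establish ω i < ω j
  have hwij : ω i < ω j := by
    rcases lt_trichotomy (ω i) (ω j) with hw | hw | hw
    · exact hw
    · exact absurd (ω.injective hw) hij.ne
    · rw [if_pos hw] at hj0
      exact absurd hj0 (by omega)
  rw [if_neg (lt_asymm hwij)] at hj0
  -- b + cij ω i j ≤ a
  have hcja : cij ω i j ≤ a := by
    by_contra hc
    push_neg at hc
    rw [Nat.sub_eq_zero_of_le hc.le] at hj0
    omega
  have hkey : b + cij ω i j ≤ a := (Nat.le_sub_iff_add_le hcja).mp hj0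
  constructor
  · intro k
    simp only [mvec]
    rcases lt_trichotomy k j with hkj | hkj | hkj
    · -- k < j : LHS = 0
      rw [if_pos hkj]
      split_ifs <;> exact Nat.zero_le _
    · -- k = j
      subst hkj
      rw [if_neg (lt_irrefl k), if_pos rfl, if_neg hjlt, if_neg hne,
        if_neg (lt_asymm hwij)]
      rw [Nat.le_sub_iff_add_le (by omega : cij ω i k ≤ a + 1)]
      omega
    · -- k > j
      have hki : ¬ k < i := not_lt_of_gt (hij.trans hkj)
      have hkne : k ≠ i := ne_of_gt (hij.trans hkj)
      rw [if_neg (not_lt_of_gt hkj), if_neg (ne_of_gt hkj), if_neg hki, if_neg hkne]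
      by_cases hwk : ω k < ω j
      · rw [if_pos hwk]
        split_ifs <;> exact Nat.zero_le _
      · rw [if_neg hwk]
        have hwki : ¬ ω k < ω i := fun hc => hwk (hc.trans hwij)
        rw [if_neg hwki]
        have htri := cij_triangle ω i j k hij hkj hwij
        by_cases hc : cij ω j k ≤ b
        · -- both subtractions are "real"
          have h2 : cij ω i k ≤ a + 1 := by omega
          rw [Nat.sub_le_iff_le_add, ← Nat.sub_add_comm h2,
            Nat.le_sub_iff_add_le (le_trans h2 (Nat.le_add_right _ _))]
          omega
        · -- b + 1 ≤ cij ω j k, so LHS = 0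
          rw [Nat.sub_eq_zero_of_le (by omega : b + 1 ≤ cij ω j k)]
          exact Nat.zero_le _
  · -- strict at coordinate i
    refine ⟨i, ?_⟩
    show (if i < j then 0 else if i = j then b + 1 else if ω i < ω j then 0
        else b + 1 - cij ω j i) <
      (if i < i then 0 else if i = i then a + 1 else if ω i < ω i then 0
        else a + 1 - cij ω i i)
    rw [if_pos hij, if_neg (lt_irrefl i), if_pos rfl]
    exact Nat.succ_pos a
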